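/- Let T be a terrain and let g ∈ T ∖ U be a point that covers an entire edge e_i of T, i.e., e_i ⊆ V(g). Then the U-neighbors u_ℓ := max{u ∈ U : x(u) < x(g)} and u_r := min{u ∈ U : x(u) > x(g)} of g exist, and each of them entirely covers e_i, i.e., e_i ⊆ V(u_ℓ) and e_i ⊆ V(u_r). -/

import Mathlib

open Set

/-- A terrain: `n ≥ 2` vertices `v 0, …, v (n-1)` in `ℝ²` with strictly
increasing `x`-coordinates. -/
structure Terrain where
  n : ℕ
  hn : 2 ≤ n
  v : ℕ → ℝ × ℝ
  mono : ∀ i j : ℕ, i < j → j < n → (v i).1 < (v j).1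

namespace Terrain

/-- The edge `e_i = [v_i, v_{i+1}]` (meaningful for `i + 1 < n`). -/
def edge (T : Terrain) (i : ℕ) : Set (ℝ × ℝ) := segment ℝ (T.v i) (T.v (i + 1))

/-- The terrain as a subset of `ℝ²`: the union of its edges. -/
def carrier (T : Terrain) : Set (ℝ × ℝ) := ⋃ i ∈ Finset.range (T.n - 1), T.edge i

/-- The interior of the edge `e_i`: the edge minus its two endpoints. -/
def intEdge (T : Terrain) (i : ℕ) : Set (ℝ × ℝ) := T.edge i \ {T.v i, T.v (i + 1)}

/-- `p` sees `q` iff every point of the segment `[p, q]` is nowhere strictly below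
the terrain, i.e. every point of the segment lies on or above the terrain point
with the same `x`-coordinate. -/
def sees (T : Terrain) (p q : ℝ × ℝ) : Prop :=
  ∀ z ∈ segment ℝ p q, ∀ t ∈ T.carrier, t.1 = z.1 → t.2 ≤ z.2

/-- The visibility region `V(p) = {q ∈ T : p sees q}`. -/
def vis (T : Terrain) (p : ℝ × ℝ) : Set (ℝ × ℝ) := {q ∈ T.carrier | T.sees p q}

/-- `V(C) = ⋃_{g ∈ C} V(g)`. -/
def visSet (T : Terrain) (C : Set (ℝ × ℝ)) : Set (ℝ × ℝ) := ⋃ g ∈ C, T.vis g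

/-- `C ⊆ T` is a cover of the terrain iff `V(C) = T`. -/
def IsCover (T : Terrain) (C : Set (ℝ × ℝ)) : Prop :=
  C ⊆ T.carrier ∧ T.visSet C = T.carrier

/-- The vertex set `V = {v_1, …, v_n}`. -/
def vertexSet (T : Terrain) : Set (ℝ × ℝ) := {p | ∃ i < T.n, p = T.v i}

/-- Edge `e_i` is critical w.r.t. `g ∈ C`: `C \ {g}` covers some part of,
but not all of, `int(e_i)`. -/
def IsCriticalWrt (T : Terrain) (C : Set (ℝ × ℝ)) (g : ℝ × ℝ) (i : ℕ) : Prop :=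
  (T.visSet (C \ {g}) ∩ T.intEdge i).Nonempty ∧ ¬ T.intEdge i ⊆ T.visSet (C \ {g})

/-- `g` is a left-guard of `e_i`: `x(g) < x(v_i)` and `e_i` is critical w.r.t. `g`. -/
def IsLeftGuard (T : Terrain) (C : Set (ℝ × ℝ)) (g : ℝ × ℝ) (i : ℕ) : Prop :=
  g.1 < (T.v i).1 ∧ T.IsCriticalWrt C g i

/-- `g` is a right-guard of `e_i`: `x(v_{i+1}) < x(g)` and `e_i` is critical w.r.t. `g`. -/
def IsRightGuard (T : Terrain) (C : Set (ℝ × ℝ)) (g : ℝ × ℝ) (i : ℕ) : Prop :=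
  (T.v (i + 1)).1 < g.1 ∧ T.IsCriticalWrt C g i

/-- `q` is extremal in `V(p)`: `q ∈ V(p)` and `q` has maximal or minimal
`x`-coordinate within its connected component of `V(p)`. -/
def Extremal (T : Terrain) (p q : ℝ × ℝ) : Prop :=
  q ∈ T.vis p ∧
    ((∀ r ∈ connectedComponentIn (T.vis p) q, r.1 ≤ q.1) ∨
     (∀ r ∈ connectedComponentIn (T.vis p) q, q.1 ≤ r.1))

/-- The guard candidate set `U`: all vertices together with the extremal points
of the vertices' visibility regions. -/
def Uset (T : Terrain) : Set (ℝ × ℝ) :=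
  T.vertexSet ∪ ⋃ i ∈ Finset.range T.n, {q | T.Extremal (T.v i) q}

/-- `OPT(G, W)`: the minimum cardinality of a finite `C ⊆ G` with `W ⊆ V(C)`. -/
noncomputable def OPT (T : Terrain) (G W : Set (ℝ × ℝ)) : ℕ :=
  sInf {k | ∃ C : Finset (ℝ × ℝ), ↑C ⊆ G ∧ W ⊆ T.visSet ↑C ∧ C.card = k}

end Terrain

lemma mem_segment_iff' {p q z : ℝ × ℝ} :
    z ∈ segment ℝ p q ↔ ∃ s : ℝ, 0 ≤ s ∧ s ≤ 1 ∧ z = (1 - s) • p + s • q := by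
  constructor
  · rintro ⟨a, b, ha, hb, hab, rfl⟩
    exact ⟨b, hb, by linarith, by rw [show (1:ℝ) - b = a by linarith]⟩
  · rintro ⟨s, h0, h1, rfl⟩
    exact ⟨1 - s, s, by linarith, h0, by ring, rfl⟩

namespace Terrain

variable (T : Terrain)

lemma mono' {i j : ℕ} (hij : i ≤ j) (hj : j < T.n) : (T.v i).1 ≤ (T.v j).1 := by
  rcases eq_or_lt_of_le hij with rfl | h
  · exact le_refl _
  · exact (T.mono i j h hj).le

lemma seg_fst_mem {p q z : ℝ × ℝ} (hz : z ∈ segment ℝ p q) :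
    z.1 ∈ segment ℝ p.1 q.1 := by
  rcases hz with ⟨a, b, ha, hb, hab, rfl⟩
  exact ⟨a, b, ha, hb, hab, rfl⟩

lemma seg_fst_le {p q z : ℝ × ℝ} (hz : z ∈ segment ℝ p q) (hpq : p.1 ≤ q.1) :
    p.1 ≤ z.1 ∧ z.1 ≤ q.1 := by
  have := seg_fst_mem hz
  rw [segment_eq_Icc hpq] at this
  exact ⟨this.1, this.2⟩

lemma edge_fst {i : ℕ} (hi : i + 1 < T.n) {z : ℝ × ℝ} (hz : z ∈ T.edge i) :
    (T.v i).1 ≤ z.1 ∧ z.1 ≤ (T.v (i+1)).1 :=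
  seg_fst_le hz (T.mono i (i+1) (Nat.lt_succ_self i) hi).le

lemma edge_subset_carrier {i : ℕ} (hi : i + 1 < T.n) : T.edge i ⊆ T.carrier := by
  intro z hz
  exact Set.mem_biUnion (Finset.mem_range.2 (by omega)) hz

lemma vertex_mem_carrier {i : ℕ} (hi : i < T.n) : T.v i ∈ T.carrier := by
  have hn := T.hn
  rcases lt_or_ge i (T.n - 1) with h | h
  · exact T.edge_subset_carrier (by omega) (left_mem_segment ℝ _ _)
  · have h2 : T.n - 2 + 1 = i := by omega
    have : T.v i ∈ T.edge (T.n - 2) := by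
      rw [edge, h2]; exact right_mem_segment ℝ _ _
    exact T.edge_subset_carrier (by omega) this

lemma carrier_mem_iff {z : ℝ × ℝ} :
    z ∈ T.carrier ↔ ∃ i, i + 1 < T.n ∧ z ∈ T.edge i := by
  have hn := T.hn
  constructor
  · intro hz
    rcases Set.mem_iUnion₂.1 hz with ⟨i, hi, hzi⟩
    exact ⟨i, by have := Finset.mem_range.1 hi; omega, hzi⟩
  · rintro ⟨i, hi, hzi⟩
    exact T.edge_subset_carrier hi hzi

private lemma carrier_uniq_aux {t t' : ℝ × ℝ} {i j : ℕ} (hi : i + 1 < T.n)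
    (hj : j + 1 < T.n) (hti : t ∈ T.edge i) (htj : t' ∈ T.edge j)
    (h : t.1 = t'.1) (hij : i ≤ j) : t = t' := by
  rcases mem_segment_iff'.1 hti with ⟨a, ha0, ha1, rfl⟩
  rcases mem_segment_iff'.1 htj with ⟨b, hb0, hb1, rfl⟩
  have hxi : (T.v i).1 < (T.v (i+1)).1 := T.mono i (i+1) (by omega) hi
  have hxj : (T.v j).1 < (T.v (j+1)).1 := T.mono j (j+1) (by omega) hj
  simp only [Prod.fst_add, Prod.smul_fst, smul_eq_mul, Prod.ext_iff, Prod.snd_add,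
    Prod.smul_snd] at h ⊢
  rcases eq_or_lt_of_le hij with rfl | hlt
  · have hab : a = b := by nlinarith [h]
    subst hab
    exact ⟨by linarith [h], by nlinarith [h]⟩
  · have hij1 : (T.v (i+1)).1 ≤ (T.v j).1 := T.mono' (by omega) (by omega)
    have ha : a = 1 := by nlinarith [h]
    have hb : b = 0 := by nlinarith [h]
    subst ha; subst hb
    have hij2 : i + 1 = j := by
      by_contra hne
      have : (T.v (i+1)).1 < (T.v j).1 := T.mono (i+1) j (by omega) (by omega)
      nlinarith [h]
    rw [hij2]
    norm_num

lemma carrier_uniq {t t' : ℝ × ℝ} (ht : t ∈ T.carrier) (ht' : t' ∈ T.carrier)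
    (h : t.1 = t'.1) : t = t' := by
  rcases (T.carrier_mem_iff).1 ht with ⟨i, hi, hti⟩
  rcases (T.carrier_mem_iff).1 ht' with ⟨j, hj, htj⟩
  rcases le_total i j with hij | hij
  · exact T.carrier_uniq_aux hi hj hti htj h hij
  · exact (T.carrier_uniq_aux hj hi htj hti h.symm hij).symm

end Terrain
lemma isCompact_segment' {p q : ℝ × ℝ} : IsCompact (segment ℝ p q) := by
  rw [segment_eq_image]
  exact (isCompact_Icc).image (by continuity)

namespace Terrain
variable (T : Terrain)

lemma carrier_x_range {t : ℝ × ℝ} (ht : t ∈ T.carrier) :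
    (T.v 0).1 ≤ t.1 ∧ t.1 ≤ (T.v (T.n - 1)).1 := by
  rcases T.carrier_mem_iff.1 ht with ⟨i, hi, hti⟩
  have h := T.edge_fst hi hti
  constructor
  · exact le_trans (T.mono' (Nat.zero_le i) (by omega)) h.1
  · exact le_trans h.2 (T.mono' (by omega) (by omega))

lemma carrier_compact : IsCompact T.carrier := by
  apply Set.Finite.isCompact_biUnion (Finset.finite_toSet _)
  intro i _
  exact isCompact_segment'

lemma carrier_closed : IsClosed T.carrier := T.carrier_compact.isClosed

lemma carrier_exists_x {x : ℝ} (h0 : (T.v 0).1 ≤ x) (h1 : x ≤ (T.v (T.n - 1)).1) :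
    ∃ t ∈ T.carrier, t.1 = x := by
  have hn := T.hn
  suffices H : ∀ k, k < T.n → x ≤ (T.v k).1 → ∃ t ∈ T.carrier, t.1 = x by
    exact H (T.n - 1) (by omega) h1
  intro k
  induction k with
  | zero =>
    intro hk hx
    refine ⟨T.v 0, T.vertex_mem_carrier (by omega), le_antisymm hx h0 |>.symm ▸ rfl⟩
  | succ k ih =>
    intro hk hx
    rcases le_or_gt x (T.v k).1 with h | h
    · exact ih (by omega) h
    · have hlt : (T.v k).1 < (T.v (k+1)).1 := T.mono k (k+1) (by omega) hk
      set s : ℝ := (x - (T.v k).1) / ((T.v (k+1)).1 - (T.v k).1) with hs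
      have hs0 : 0 ≤ s := by
        apply div_nonneg <;> linarith
      have hs1 : s ≤ 1 := by
        rw [div_le_one (by linarith)]; linarith
      refine ⟨(1 - s) • T.v k + s • T.v (k+1), T.edge_subset_carrier (by omega)
        (mem_segment_iff'.2 ⟨s, hs0, hs1, rfl⟩), ?_⟩
      show (1 - s) * (T.v k).1 + s * (T.v (k+1)).1 = x
      rw [hs]
      have hne : (T.v (k+1)).1 - (T.v k).1 ≠ 0 := by linarith
      field_simp
      ring

/-- The Lipschitz constant of the terrain. -/
noncomputable def K (T : Terrain) : ℝ :=
  (Finset.range (T.n - 1)).sup' (by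
    have := T.hn
    exact Finset.nonempty_range_iff.2 (by omega))
    (fun i => |((T.v (i+1)).2 - (T.v i).2) / ((T.v (i+1)).1 - (T.v i).1)|)

lemma K_nonneg : 0 ≤ T.K := by
  have hn := T.hn
  rw [K]
  refine le_trans (abs_nonneg _)
    (Finset.le_sup' (fun i => |((T.v (i+1)).2 - (T.v i).2) / ((T.v (i+1)).1 - (T.v i).1)|)
      (Finset.mem_range.2 (show 0 < T.n - 1 by omega)))

lemma slope_le_K {i : ℕ} (hi : i + 1 < T.n) :
    |((T.v (i+1)).2 - (T.v i).2)| ≤ T.K * ((T.v (i+1)).1 - (T.v i).1) := by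
  have hlt : (T.v i).1 < (T.v (i+1)).1 := T.mono i (i+1) (by omega) hi
  have h := Finset.le_sup' (α := ℝ)
    (fun j => |((T.v (j+1)).2 - (T.v j).2) / ((T.v (j+1)).1 - (T.v j).1)|)
    (Finset.mem_range.2 (show i < T.n - 1 by omega))
  rw [← K] at h
  rw [abs_div] at h
  rw [show |(T.v (i+1)).1 - (T.v i).1| = (T.v (i+1)).1 - (T.v i).1 from abs_of_pos (by linarith)] at h
  exact (div_le_iff₀ (by linarith)).1 h

lemma edge_lipschitz {i : ℕ} (hi : i + 1 < T.n) {t t' : ℝ × ℝ}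
    (ht : t ∈ T.edge i) (ht' : t' ∈ T.edge i) :
    |t.2 - t'.2| ≤ T.K * |t.1 - t'.1| := by
  rcases mem_segment_iff'.1 ht with ⟨a, ha0, ha1, rfl⟩
  rcases mem_segment_iff'.1 ht' with ⟨b, hb0, hb1, rfl⟩
  have hlt : (T.v i).1 < (T.v (i+1)).1 := T.mono i (i+1) (by omega) hi
  have hs := T.slope_le_K hi
  simp only [Prod.fst_add, Prod.snd_add, Prod.smul_fst, Prod.smul_snd, smul_eq_mul]
  have h1 : (1 - a) * (T.v i).2 + a * (T.v (i+1)).2 - ((1 - b) * (T.v i).2 + b * (T.v (i+1)).2)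
      = (a - b) * ((T.v (i+1)).2 - (T.v i).2) := by ring
  have h2 : (1 - a) * (T.v i).1 + a * (T.v (i+1)).1 - ((1 - b) * (T.v i).1 + b * (T.v (i+1)).1)
      = (a - b) * ((T.v (i+1)).1 - (T.v i).1) := by ring
  rw [h1, h2, abs_mul, abs_mul]
  calc |a - b| * |(T.v (i+1)).2 - (T.v i).2|
      ≤ |a - b| * (T.K * ((T.v (i+1)).1 - (T.v i).1)) :=
        mul_le_mul_of_nonneg_left hs (abs_nonneg _)
    _ = T.K * (|a - b| * ((T.v (i+1)).1 - (T.v i).1)) := by ring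
    _ = T.K * (|a - b| * |(T.v (i+1)).1 - (T.v i).1|) := by
        rw [abs_of_pos (by linarith : (0:ℝ) < (T.v (i+1)).1 - (T.v i).1)]

end Terrain
namespace Terrain
variable (T : Terrain)

private lemma lip_vertex {i : ℕ} (hi : i + 1 < T.n) {t : ℝ × ℝ} (ht : t ∈ T.edge i) :
    ∀ j, i + 1 ≤ j → j < T.n → |t.2 - (T.v j).2| ≤ T.K * ((T.v j).1 - t.1) := by
  intro j
  induction j with
  | zero => omega
  | succ j ihj =>
    intro hij hj
    rcases Nat.lt_or_ge i.succ j.succ with hlt | hge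
    · -- i + 1 ≤ j
      have h1 := ihj (by omega) (by omega)
      have h2 : |(T.v j).2 - (T.v (j+1)).2| ≤ T.K * ((T.v (j+1)).1 - (T.v j).1) := by
        have := T.slope_le_K (show j + 1 < T.n by omega)
        rwa [abs_sub_comm] at this
      have hx : t.1 ≤ (T.v j).1 := le_trans (T.edge_fst hi ht).2 (T.mono' (by omega) (by omega))
      calc |t.2 - (T.v (j+1)).2| ≤ |t.2 - (T.v j).2| + |(T.v j).2 - (T.v (j+1)).2| := abs_sub_le _ _ _
        _ ≤ T.K * ((T.v j).1 - t.1) + T.K * ((T.v (j+1)).1 - (T.v j).1) := by linarith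
        _ = T.K * ((T.v (j+1)).1 - t.1) := by ring
    · -- j + 1 = i + 1
      have : j = i := by omega
      subst this
      have h := T.edge_lipschitz hi ht (right_mem_segment ℝ _ _)
      have hx : t.1 ≤ (T.v (j+1)).1 := (T.edge_fst hi ht).2
      rwa [show |t.1 - (T.v (j+1)).1| = (T.v (j+1)).1 - t.1 by rw [abs_sub_comm]; exact abs_of_nonneg (by linarith)] at h

lemma carrier_lipschitz {t t' : ℝ × ℝ} (ht : t ∈ T.carrier) (ht' : t' ∈ T.carrier) :
    |t.2 - t'.2| ≤ T.K * |t.1 - t'.1| := by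
  -- wlog via auxiliary orderd version
  suffices H : ∀ t t' : ℝ × ℝ, t ∈ T.carrier → t' ∈ T.carrier →
      (∃ i j, i + 1 < T.n ∧ j + 1 < T.n ∧ i ≤ j ∧ t ∈ T.edge i ∧ t' ∈ T.edge j) →
      |t.2 - t'.2| ≤ T.K * |t.1 - t'.1| by
    rcases T.carrier_mem_iff.1 ht with ⟨i, hi, hti⟩
    rcases T.carrier_mem_iff.1 ht' with ⟨j, hj, htj⟩
    rcases le_total i j with hij | hij
    · exact H t t' ht ht' ⟨i, j, hi, hj, hij, hti, htj⟩
    · rw [abs_sub_comm, abs_sub_comm t.1 t'.1]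
      exact H t' t ht' ht ⟨j, i, hj, hi, hij, htj, hti⟩
  rintro t t' ht ht' ⟨i, j, hi, hj, hij, hti, htj⟩
  rcases eq_or_lt_of_le hij with rfl | hlt
  · exact T.edge_lipschitz hi hti htj
  · have h1 : |t.2 - (T.v j).2| ≤ T.K * ((T.v j).1 - t.1) :=
      T.lip_vertex hi hti j (by omega) (by omega)
    have h2 : |(T.v j).2 - t'.2| ≤ T.K * |((T.v j)).1 - t'.1| :=
      T.edge_lipschitz hj (left_mem_segment ℝ _ _) htj
    have hx1 : t.1 ≤ (T.v j).1 := le_trans (T.edge_fst hi hti).2 (T.mono' (by omega) (by omega))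
    have hx2 : (T.v j).1 ≤ t'.1 := (T.edge_fst hj htj).1
    rw [show |(T.v j).1 - t'.1| = t'.1 - (T.v j).1 by rw [abs_sub_comm]; exact abs_of_nonneg (by linarith)] at h2
    have hxx : |t.1 - t'.1| = t'.1 - t.1 := by rw [abs_sub_comm]; exact abs_of_nonneg (by linarith)
    rw [hxx]
    calc |t.2 - t'.2| ≤ |t.2 - (T.v j).2| + |(T.v j).2 - t'.2| := abs_sub_le _ _ _
      _ ≤ T.K * ((T.v j).1 - t.1) + T.K * (t'.1 - (T.v j).1) := by linarith
      _ = T.K * (t'.1 - t.1) := by ring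

lemma sees_symm {p q : ℝ × ℝ} (h : T.sees p q) : T.sees q p := by
  intro z hz
  exact h z (by rwa [segment_symm])

lemma vis_subset_carrier (p : ℝ × ℝ) : T.vis p ⊆ T.carrier := fun q hq => hq.1

lemma mem_vis_symm {p q : ℝ × ℝ} (hp : p ∈ T.carrier) (hq : q ∈ T.vis p) : p ∈ T.vis q :=
  ⟨hp, T.sees_symm hq.2⟩

lemma vis_closed {p : ℝ × ℝ} (hp : p ∈ T.carrier) : IsClosed (T.vis p) := by
  rw [← closure_subset_iff_isClosed]
  intro q hq
  have hqc : q ∈ T.carrier :=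
    T.carrier_closed.closure_subset_iff.2 (T.vis_subset_carrier p) (closure_mono subset_rfl hq)
  refine ⟨hqc, ?_⟩
  intro z hz t ht htz
  rcases mem_segment_iff'.1 hz with ⟨s, hs0, hs1, rfl⟩
  set z := (1 - s) • p + s • q with hzdef
  refine le_of_forall_pos_le_add ?_
  intro ε hε
  have hK1 : (0:ℝ) < T.K + 1 := by linarith [T.K_nonneg]
  have hδ : (0:ℝ) < ε / (T.K + 1) := by positivity
  rcases Metric.mem_closure_iff.1 hq (ε / (T.K + 1)) hδ with ⟨q', hq', hdist⟩
  set z' : ℝ × ℝ := (1 - s) • p + s • q' with hz'def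
  have hz'seg : z' ∈ segment ℝ p q' := mem_segment_iff'.2 ⟨s, hs0, hs1, rfl⟩
  -- terrain point at x = z'.1
  have hz'range : (T.v 0).1 ≤ z'.1 ∧ z'.1 ≤ (T.v (T.n-1)).1 := by
    have hp1 := T.carrier_x_range hp
    have hq1 := T.carrier_x_range (T.vis_subset_carrier p hq')
    have : z'.1 = (1 - s) * p.1 + s * q'.1 := rfl
    constructor
    · rw [this]; nlinarith
    · rw [this]; nlinarith
  rcases T.carrier_exists_x hz'range.1 hz'range.2 with ⟨t', ht', ht'x⟩
  have hsee : t'.2 ≤ z'.2 := hq'.2 z' hz'seg t' ht' ht'x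
  have hlip : |t.2 - t'.2| ≤ T.K * |t.1 - t'.1| := T.carrier_lipschitz ht ht'
  have hd1 : |q.1 - q'.1| ≤ ε / (T.K + 1) := by
    have := le_max_left (dist q.1 q'.1) (dist q.2 q'.2)
    rw [← Prod.dist_eq] at this
    rw [← Real.dist_eq]
    linarith
  have hd2 : |q.2 - q'.2| ≤ ε / (T.K + 1) := by
    have := le_max_right (dist q.1 q'.1) (dist q.2 q'.2)
    rw [← Prod.dist_eq] at this
    rw [← Real.dist_eq]
    linarith
  have hzx : |z.1 - z'.1| ≤ ε / (T.K + 1) := by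
    have h1 : z.1 - z'.1 = s * (q.1 - q'.1) := by
      show ((1 - s) * p.1 + s * q.1) - ((1 - s) * p.1 + s * q'.1) = s * (q.1 - q'.1)
      ring
    rw [h1, abs_mul, abs_of_nonneg hs0]
    calc s * |q.1 - q'.1| ≤ 1 * |q.1 - q'.1| := by
          apply mul_le_mul_of_nonneg_right hs1 (abs_nonneg _)
      _ = |q.1 - q'.1| := one_mul _
      _ ≤ ε / (T.K + 1) := hd1
  have hzy : |z.2 - z'.2| ≤ ε / (T.K + 1) := by
    have h1 : z.2 - z'.2 = s * (q.2 - q'.2) := by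
      show ((1 - s) * p.2 + s * q.2) - ((1 - s) * p.2 + s * q'.2) = s * (q.2 - q'.2)
      ring
    rw [h1, abs_mul, abs_of_nonneg hs0]
    calc s * |q.2 - q'.2| ≤ 1 * |q.2 - q'.2| := by
          apply mul_le_mul_of_nonneg_right hs1 (abs_nonneg _)
      _ = |q.2 - q'.2| := one_mul _
      _ ≤ ε / (T.K + 1) := hd2
  -- combine
  have htx : t.1 = z.1 := htz
  have hKd : T.K * (ε / (T.K + 1)) + ε / (T.K + 1) = ε := by
    field_simp
  have h1 : t.2 ≤ t'.2 + T.K * |t.1 - t'.1| := by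
    have := abs_sub_le_iff.1 hlip
    linarith [this.1]
  have h2 : |t.1 - t'.1| = |z.1 - z'.1| := by rw [htx, ht'x]
  have h3 : z'.2 ≤ z.2 + ε / (T.K + 1) := by
    have := abs_sub_le_iff.1 hzy
    linarith [this.2]
  have h4 : T.K * |z.1 - z'.1| ≤ T.K * (ε / (T.K + 1)) :=
    mul_le_mul_of_nonneg_left hzx T.K_nonneg
  calc t.2 ≤ t'.2 + T.K * |t.1 - t'.1| := h1
    _ = t'.2 + T.K * |z.1 - z'.1| := by rw [h2]
    _ ≤ z'.2 + T.K * (ε / (T.K + 1)) := by linarith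
    _ ≤ z.2 + ε / (T.K + 1) + T.K * (ε / (T.K + 1)) := by linarith
    _ = z.2 + ε := by linarith [hKd]

end Terrain
namespace Terrain
variable (T : Terrain)

lemma xconvex {S : Set (ℝ × ℝ)} (hSc : S ⊆ T.carrier) (hS : IsPreconnected S)
    {p q t : ℝ × ℝ} (hp : p ∈ S) (hq : q ∈ S) (ht : t ∈ T.carrier)
    (h1 : p.1 ≤ t.1) (h2 : t.1 ≤ q.1) : t ∈ S := by
  have himg : IsPreconnected (Prod.fst '' S) := hS.image _ (continuous_fst.continuousOn)
  have hord : (Prod.fst '' S).OrdConnected := himg.ordConnected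
  have : t.1 ∈ Prod.fst '' S :=
    hord.out (Set.mem_image_of_mem _ hp) (Set.mem_image_of_mem _ hq) ⟨h1, h2⟩
  rcases this with ⟨s, hsS, hs1⟩
  rwa [T.carrier_uniq (hSc hsS) ht hs1] at hsS

lemma closed_connectedComponentIn {F : Set (ℝ × ℝ)} (hF : IsClosed F) (x : ℝ × ℝ) :
    IsClosed (connectedComponentIn F x) := by
  by_cases hx : x ∈ F
  · have h1 : IsPreconnected (closure (connectedComponentIn F x)) :=
      isPreconnected_connectedComponentIn.closure
    have h2 : closure (connectedComponentIn F x) ⊆ F :=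
      (closure_mono (connectedComponentIn_subset F x)).trans hF.closure_eq.subset
    have h3 : closure (connectedComponentIn F x) ⊆ connectedComponentIn F x :=
      h1.subset_connectedComponentIn (subset_closure (mem_connectedComponentIn hx)) h2
    exact isClosed_of_closure_subset h3
  · rw [connectedComponentIn_eq_empty hx]
    exact isClosed_empty

/-- The set of extremal points of `V(p)` is closed, for `p ∈ carrier`. -/
lemma extremal_closed {p : ℝ × ℝ} (hp : p ∈ T.carrier) :
    IsClosed {q | T.Extremal p q} := by
  rw [← closure_subset_iff_isClosed]
  intro q hq
  have hvisq : q ∈ T.vis p := by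
    have : closure {q | T.Extremal p q} ⊆ closure (T.vis p) :=
      closure_mono (fun r hr => hr.1)
    exact ((T.vis_closed hp).closure_eq ▸ this) hq
  refine ⟨hvisq, ?_⟩
  by_contra hcon
  push_neg at hcon
  obtain ⟨⟨a, haC, haq⟩, ⟨b, hbC, hbq⟩⟩ := hcon
  -- a, b in the component of q with b.1 < q.1 < a.1
  set C := connectedComponentIn (T.vis p) q with hC
  have hCconn : IsPreconnected C := isPreconnected_connectedComponentIn
  have hCsub : C ⊆ T.carrier := (connectedComponentIn_subset _ _).trans (T.vis_subset_carrier p)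
  -- pick an extremal point q' close to q
  have hδ : (0:ℝ) < min (q.1 - b.1) (a.1 - q.1) := by
    apply lt_min <;> linarith
  rcases Metric.mem_closure_iff.1 hq _ hδ with ⟨q', hq'ext, hdist⟩
  have hq'x : |q.1 - q'.1| < min (q.1 - b.1) (a.1 - q.1) := by
    have := le_max_left (dist q.1 q'.1) (dist q.2 q'.2)
    rw [← Prod.dist_eq] at this
    rw [← Real.dist_eq]
    linarith
  have hbq' : b.1 < q'.1 := by
    have h1 : q.1 - q'.1 ≤ |q.1 - q'.1| := le_abs_self _
    have h2 := min_le_left (q.1 - b.1) (a.1 - q.1)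
    linarith
  have hq'a : q'.1 < a.1 := by
    have h1 : q'.1 - q.1 ≤ |q.1 - q'.1| := by
      rw [abs_sub_comm]; exact le_abs_self _
    have h2 := min_le_right (q.1 - b.1) (a.1 - q.1)
    linarith
  -- q' ∈ C
  have hq'C : q' ∈ C := T.xconvex hCsub hCconn hbC haC
    (T.vis_subset_carrier p hq'ext.1) hbq'.le hq'a.le
  -- so the component of q' is C, contradicting extremality of q'
  have hCeq : connectedComponentIn (T.vis p) q' = C := (connectedComponentIn_eq hq'C).symm
  rcases hq'ext.2 with h | h
  · have := h a (hCeq ▸ haC)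
    linarith
  · have := h b (hCeq ▸ hbC)
    linarith

lemma vertexSet_finite : T.vertexSet.Finite := by
  have : T.vertexSet ⊆ T.v '' (Set.Iio T.n) := by
    rintro p ⟨i, hi, rfl⟩
    exact ⟨i, hi, rfl⟩
  exact Set.Finite.subset ((Set.finite_Iio _).image _) this

lemma Uset_subset_carrier : T.Uset ⊆ T.carrier := by
  rintro u (hu | hu)
  · rcases hu with ⟨i, hi, rfl⟩
    exact T.vertex_mem_carrier hi
  · rcases Set.mem_iUnion₂.1 hu with ⟨i, hi, hext⟩
    exact T.vis_subset_carrier _ hext.1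

lemma Uset_closed : IsClosed T.Uset := by
  apply IsClosed.union
  · exact T.vertexSet_finite.isClosed
  · apply Set.Finite.isClosed_biUnion (Finset.finite_toSet _)
    intro i hi
    exact T.extremal_closed (T.vertex_mem_carrier (Finset.mem_range.1 hi))

end Terrain
section Pivot

lemma pivotFin (c e : Fin 3 → ℝ) (hc : ∀ k, 0 ≤ c k) (hneg : ∃ k, e k < 0) :
    ∃ t : ℝ, 0 ≤ t ∧ (∀ k, 0 ≤ c k + t * e k) ∧
      (c 0 + t * e 0 = 0 ∨ c 1 + t * e 1 = 0 ∨ c 2 + t * e 2 = 0) := by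
  classical
  set S : Finset (Fin 3) := Finset.univ.filter (fun k => e k < 0) with hSdef
  have hS : S.Nonempty := by
    rcases hneg with ⟨k, hk⟩
    exact ⟨k, by simp [hSdef, hk]⟩
  set t : ℝ := S.inf' hS (fun k => c k / (-(e k))) with ht
  have hmemS : ∀ k ∈ S, e k < 0 := by
    intro k hk
    simpa [hSdef] using (Finset.mem_filter.1 hk).2
  have ht0 : 0 ≤ t := by
    apply Finset.le_inf'
    intro k hk
    have hek := hmemS k hk
    exact div_nonneg (hc k) (by linarith)
  refine ⟨t, ht0, ?_, ?_⟩
  · intro k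
    by_cases hk : e k < 0
    · have hkS : k ∈ S := by simp [hSdef, hk]
      have := Finset.inf'_le (fun k => c k / (-(e k))) hkS
      rw [← ht] at this
      have hpos : (0:ℝ) < -(e k) := by linarith
      have := (le_div_iff₀ hpos).1 this
      nlinarith
    · push_neg at hk
      nlinarith [hc k]
  · obtain ⟨j, hjS, hjeq⟩ := Finset.exists_mem_eq_inf' hS (fun k => c k / (-(e k)))
    have hej := hmemS j hjS
    rw [← ht] at hjeq
    have hz : c j + t * e j = 0 := by
      rw [hjeq]
      have hne : -(e j) ≠ 0 := by linarith
      field_simp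
      rw [div_self hej.ne]; ring
    rcases j with ⟨jv, hjlt⟩
    interval_cases jv
    · exact Or.inl hz
    · exact Or.inr (Or.inl hz)
    · exact Or.inr (Or.inr hz)

/-- Vertical slice lemma: any convex combination of three points (with two of them
having distinct x-coordinates) lies above some point of the boundary of the triangle
with the same x-coordinate. -/
lemma slice_lemma (u a b : ℝ × ℝ) (hab : a.1 ≠ b.1) (c0 c1 c2 : ℝ)
    (h0 : 0 ≤ c0) (h1 : 0 ≤ c1) (h2 : 0 ≤ c2) (hsum : c0 + c1 + c2 = 1) :
    ∃ w : ℝ × ℝ, w.1 = (c0 • u + c1 • a + c2 • b).1 ∧ w.2 ≤ (c0 • u + c1 • a + c2 • b).2 ∧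
      (w ∈ segment ℝ a b ∨ w ∈ segment ℝ u b ∨ w ∈ segment ℝ u a) := by
  obtain ⟨e0, e1, e2, he0, hesum, hex, hey⟩ :
      ∃ e0 e1 e2 : ℝ, e0 ≠ 0 ∧ e0 + e1 + e2 = 0 ∧
        e0 * u.1 + e1 * a.1 + e2 * b.1 = 0 ∧ e0 * u.2 + e1 * a.2 + e2 * b.2 ≤ 0 := by
    rcases le_or_gt ((a.1 - b.1) * u.2 + (b.1 - u.1) * a.2 + (u.1 - a.1) * b.2) 0 with h | h
    · exact ⟨a.1 - b.1, b.1 - u.1, u.1 - a.1, sub_ne_zero.2 hab, by ring, by ring, h⟩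
    · exact ⟨-(a.1 - b.1), -(b.1 - u.1), -(u.1 - a.1), by
        simpa using sub_ne_zero.2 hab.symm, by ring, by ring, by linarith⟩
  have hneg : ∃ k : Fin 3, (![e0, e1, e2]) k < 0 := by
    rcases lt_or_gt_of_ne he0 with h | h
    · exact ⟨0, by simpa using h⟩
    · -- e0 > 0, so e1 + e2 < 0, so one of them is < 0
      rcases lt_or_ge e1 0 with h1' | h1'
      · exact ⟨1, by simpa using h1'⟩
      · refine ⟨2, by simp; linarith⟩
  obtain ⟨t, ht0, hge, hj⟩ := pivotFin ![c0, c1, c2] ![e0, e1, e2]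
    (fun k => by fin_cases k <;> simpa) hneg
  have hg0 := hge 0
  have hg1 := hge 1
  have hg2 := hge 2
  simp only [Matrix.cons_val_zero, Matrix.cons_val_one, Matrix.head_cons,
    Matrix.cons_val_two, Matrix.tail_cons] at hg0 hg1 hg2
  set w : ℝ × ℝ := (c0 + t * e0) • u + (c1 + t * e1) • a + (c2 + t * e2) • b with hw
  have hwx : w.1 = (c0 • u + c1 • a + c2 • b).1 := by
    show (c0 + t * e0) * u.1 + (c1 + t * e1) * a.1 + (c2 + t * e2) * b.1
      = c0 * u.1 + c1 * a.1 + c2 * b.1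
    nlinarith [hex]
  have hwy : w.2 ≤ (c0 • u + c1 • a + c2 • b).2 := by
    show (c0 + t * e0) * u.2 + (c1 + t * e1) * a.2 + (c2 + t * e2) * b.2
      ≤ c0 * u.2 + c1 * a.2 + c2 * b.2
    nlinarith [hey, ht0]
  have hwsum : (c0 + t * e0) + (c1 + t * e1) + (c2 + t * e2) = 1 := by
    nlinarith [hesum]
  refine ⟨w, hwx, hwy, ?_⟩
  simp only [Matrix.cons_val_zero, Matrix.cons_val_one, Matrix.head_cons,
    Matrix.cons_val_two, Matrix.tail_cons] at hj
  rcases hj with hj | hj | hj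
  · left
    refine ⟨c1 + t * e1, c2 + t * e2, hg1, hg2, by linarith, ?_⟩
    rw [hw, hj]
    simp
  · right; left
    refine ⟨c0 + t * e0, c2 + t * e2, hg0, hg2, by linarith, ?_⟩
    rw [hw, hj]
    simp
  · right; right
    refine ⟨c0 + t * e0, c1 + t * e1, hg0, hg1, by linarith, ?_⟩
    rw [hw, hj]
    simp

end Pivot
namespace Terrain
variable (T : Terrain)

lemma sees_edge_of_sees_endpoints {i : ℕ} (hi : i + 1 < T.n) {u : ℝ × ℝ}
    (hu : u ∈ T.carrier) (ha : T.sees u (T.v i)) (hb : T.sees u (T.v (i+1))) :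
    T.edge i ⊆ T.vis u := by
  intro q hq
  refine ⟨T.edge_subset_carrier hi hq, ?_⟩
  intro z hz t ht htz
  rcases mem_segment_iff'.1 hq with ⟨r, hr0, hr1, rfl⟩
  rcases mem_segment_iff'.1 hz with ⟨s, hs0, hs1, rfl⟩
  set a := T.v i
  set b := T.v (i+1)
  have hab : a.1 ≠ b.1 := ne_of_lt (T.mono i (i+1) (by omega) hi)
  have hzc : (1 - s) • u + s • ((1 - r) • a + r • b)
      = (1 - s) • u + (s * (1 - r)) • a + (s * r) • b := by
    rw [smul_add, smul_smul, smul_smul, add_assoc]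
  obtain ⟨w, hwx, hwy, hwmem⟩ := slice_lemma u a b hab (1 - s) (s * (1 - r)) (s * r)
    (by linarith) (by nlinarith) (by nlinarith) (by ring)
  rw [← hzc] at hwx hwy
  rcases hwmem with hw | hw | hw
  · -- w on the edge itself
    have hwc : w ∈ T.carrier := T.edge_subset_carrier hi hw
    have : t = w := T.carrier_uniq ht hwc (by rw [htz, hwx])
    rw [this]
    exact hwy
  · -- w on segment [u, b]
    have := hb w hw t ht (by rw [htz, hwx])
    linarith
  · have := ha w hw t ht (by rw [htz, hwx])
    linarith

lemma extremal_mem_Uset {j : ℕ} (hj : j < T.n) {q : ℝ × ℝ}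
    (h : T.Extremal (T.v j) q) : q ∈ T.Uset :=
  Or.inr (Set.mem_biUnion (Finset.mem_range.2 hj) h)

/-- components of visibility regions of vertices have extremal endpoints -/
lemma comp_max {j : ℕ} (hj : j < T.n) {g : ℝ × ℝ} (hg : g ∈ T.vis (T.v j)) :
    ∃ m ∈ connectedComponentIn (T.vis (T.v j)) g,
      T.Extremal (T.v j) m ∧ ∀ r ∈ connectedComponentIn (T.vis (T.v j)) g, r.1 ≤ m.1 := by
  have hvc : IsClosed (T.vis (T.v j)) := T.vis_closed (T.vertex_mem_carrier hj)
  set C := connectedComponentIn (T.vis (T.v j)) g with hC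
  have hCc : IsClosed C := Terrain.closed_connectedComponentIn hvc g
  have hCsub : C ⊆ T.carrier := (connectedComponentIn_subset _ _).trans (T.vis_subset_carrier _)
  have hCcomp : IsCompact C := T.carrier_compact.of_isClosed_subset hCc hCsub
  have hCne : C.Nonempty := ⟨g, mem_connectedComponentIn hg⟩
  obtain ⟨m, hmC, hmax⟩ := hCcomp.exists_isMaxOn hCne continuous_fst.continuousOn
  have hmvis : m ∈ T.vis (T.v j) := connectedComponentIn_subset _ _ hmC
  have hcompeq : connectedComponentIn (T.vis (T.v j)) m = C := (connectedComponentIn_eq hmC).symm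
  exact ⟨m, hmC, ⟨hmvis, Or.inl (by rw [hcompeq]; exact fun r hr => hmax hr)⟩,
    fun r hr => hmax hr⟩

lemma comp_min {j : ℕ} (hj : j < T.n) {g : ℝ × ℝ} (hg : g ∈ T.vis (T.v j)) :
    ∃ m ∈ connectedComponentIn (T.vis (T.v j)) g,
      T.Extremal (T.v j) m ∧ ∀ r ∈ connectedComponentIn (T.vis (T.v j)) g, m.1 ≤ r.1 := by
  have hvc : IsClosed (T.vis (T.v j)) := T.vis_closed (T.vertex_mem_carrier hj)
  set C := connectedComponentIn (T.vis (T.v j)) g with hC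
  have hCc : IsClosed C := Terrain.closed_connectedComponentIn hvc g
  have hCsub : C ⊆ T.carrier := (connectedComponentIn_subset _ _).trans (T.vis_subset_carrier _)
  have hCcomp : IsCompact C := T.carrier_compact.of_isClosed_subset hCc hCsub
  have hCne : C.Nonempty := ⟨g, mem_connectedComponentIn hg⟩
  obtain ⟨m, hmC, hmin⟩ := hCcomp.exists_isMinOn hCne continuous_fst.continuousOn
  have hmvis : m ∈ T.vis (T.v j) := connectedComponentIn_subset _ _ hmC
  have hcompeq : connectedComponentIn (T.vis (T.v j)) m = C := (connectedComponentIn_eq hmC).symm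
  exact ⟨m, hmC, ⟨hmvis, Or.inr (by rw [hcompeq]; exact fun r hr => hmin hr)⟩,
    fun r hr => hmin hr⟩

/-- a non-`U` point of a component has strictly larger and smaller x-neighbours in it -/
lemma not_extremal {j : ℕ} (hj : j < T.n) {g : ℝ × ℝ} (hg : g ∈ T.vis (T.v j))
    (hgU : g ∉ T.Uset) :
    (∃ r ∈ connectedComponentIn (T.vis (T.v j)) g, g.1 < r.1) ∧
    (∃ r ∈ connectedComponentIn (T.vis (T.v j)) g, r.1 < g.1) := by
  have hne : ¬ T.Extremal (T.v j) g := fun h => hgU (T.extremal_mem_Uset hj h)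
  rw [Extremal] at hne
  push_neg at hne
  obtain ⟨⟨r1, h1, h1'⟩, ⟨r2, h2, h2'⟩⟩ := hne hg
  exact ⟨⟨r1, h1, by linarith⟩, ⟨r2, h2, by linarith⟩⟩

end Terrain


/-- If `g ∈ T ∖ U` covers an entire edge `e_i`, then its `U`-neighbors
`u_ℓ = max{u ∈ U : x(u) < x(g)}` and `u_r = min{u ∈ U : x(u) > x(g)}` exist and each
entirely covers `e_i`. -/
theorem U_neighbors_cover_edge (T : Terrain) (g : ℝ × ℝ)
    (hg : g ∈ T.carrier \ T.Uset) (i : ℕ) (hi : i + 1 < T.n)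
    (hcov : T.edge i ⊆ T.vis g) :
    (∃ ul ∈ T.Uset, ul.1 < g.1 ∧ (∀ u ∈ T.Uset, u.1 < g.1 → u.1 ≤ ul.1) ∧
      T.edge i ⊆ T.vis ul) ∧
    (∃ ur ∈ T.Uset, g.1 < ur.1 ∧ (∀ u ∈ T.Uset, g.1 < u.1 → ur.1 ≤ u.1) ∧
      T.edge i ⊆ T.vis ur) := by
  obtain ⟨hgc, hgU⟩ := hg
  have hin : i < T.n := by omega
  -- g sees both endpoints, hence g is in the visibility region of both endpoints
  have hga : g ∈ T.vis (T.v i) :=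
    T.mem_vis_symm hgc (hcov (left_mem_segment ℝ _ _))
  have hgb : g ∈ T.vis (T.v (i+1)) :=
    T.mem_vis_symm hgc (hcov (right_mem_segment ℝ _ _))
  -- components of g
  set Ca := connectedComponentIn (T.vis (T.v i)) g with hCa
  set Cb := connectedComponentIn (T.vis (T.v (i+1))) g with hCb
  have hCaconn : IsPreconnected Ca := isPreconnected_connectedComponentIn
  have hCbconn : IsPreconnected Cb := isPreconnected_connectedComponentIn
  have hCasub : Ca ⊆ T.carrier := (connectedComponentIn_subset _ _).trans (T.vis_subset_carrier _)
  have hCbsub : Cb ⊆ T.carrier := (connectedComponentIn_subset _ _).trans (T.vis_subset_carrier _)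
  have hgCa : g ∈ Ca := mem_connectedComponentIn hga
  have hgCb : g ∈ Cb := mem_connectedComponentIn hgb
  -- extremal endpoints of the components
  obtain ⟨Ma, hMaC, hMaExt, hMamax⟩ := T.comp_max hin hga
  obtain ⟨ma, hmaC, hmaExt, hmamin⟩ := T.comp_min hin hga
  obtain ⟨Mb, hMbC, hMbExt, hMbmax⟩ := T.comp_max hi hgb
  obtain ⟨mb, hmbC, hmbExt, hmbmin⟩ := T.comp_min hi hgb
  have hMaU : Ma ∈ T.Uset := T.extremal_mem_Uset hin hMaExt
  have hmaU : ma ∈ T.Uset := T.extremal_mem_Uset hin hmaExt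
  have hMbU : Mb ∈ T.Uset := T.extremal_mem_Uset hi hMbExt
  have hmbU : mb ∈ T.Uset := T.extremal_mem_Uset hi hmbExt
  -- g is not extremal, so the components extend strictly on both sides
  obtain ⟨⟨ra, hraC, hra⟩, ⟨la, hlaC, hla⟩⟩ := T.not_extremal hin hga hgU
  obtain ⟨⟨rb, hrbC, hrb⟩, ⟨lb, hlbC, hlb⟩⟩ := T.not_extremal hi hgb hgU
  have hMag : g.1 < Ma.1 := lt_of_lt_of_le hra (hMamax ra hraC)
  have hmag : ma.1 < g.1 := lt_of_le_of_lt (hmamin la hlaC) hla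
  have hMbg : g.1 < Mb.1 := lt_of_lt_of_le hrb (hMbmax rb hrbC)
  have hmbg : mb.1 < g.1 := lt_of_le_of_lt (hmbmin lb hlbC) hlb
  -- U is compact
  have hUcomp : IsCompact T.Uset :=
    T.carrier_compact.of_isClosed_subset T.Uset_closed T.Uset_subset_carrier
  constructor
  · -- left neighbour
    set KL : Set (ℝ × ℝ) := T.Uset ∩ {p | p.1 ≤ g.1} with hKL
    have hKLcomp : IsCompact KL :=
      hUcomp.of_isClosed_subset (T.Uset_closed.inter (isClosed_le (by continuity) (by continuity)))
        Set.inter_subset_left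
    have hKLne : KL.Nonempty := ⟨ma, hmaU, hmag.le⟩
    obtain ⟨ul, hulK, hulmax⟩ := hKLcomp.exists_isMaxOn hKLne continuous_fst.continuousOn
    have hulU : ul ∈ T.Uset := hulK.1
    have hulg : ul.1 < g.1 := by
      have h2 : ul.1 ≤ g.1 := hulK.2
      rcases lt_or_eq_of_le h2 with h | h
      · exact h
      · exact absurd (T.carrier_uniq (T.Uset_subset_carrier hulU) hgc h ▸ hulU) hgU
    have hmaul : ma.1 ≤ ul.1 := hulmax (⟨hmaU, hmag.le⟩ : ma ∈ KL)
    have hmbul : mb.1 ≤ ul.1 := hulmax (⟨hmbU, hmbg.le⟩ : mb ∈ KL)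
    have hulCa : ul ∈ Ca := T.xconvex hCasub hCaconn hmaC hgCa
      (T.Uset_subset_carrier hulU) hmaul hulg.le
    have hulCb : ul ∈ Cb := T.xconvex hCbsub hCbconn hmbC hgCb
      (T.Uset_subset_carrier hulU) hmbul hulg.le
    refine ⟨ul, hulU, hulg, fun u hu hug => hulmax (⟨hu, hug.le⟩ : u ∈ KL), ?_⟩
    exact T.sees_edge_of_sees_endpoints hi (T.Uset_subset_carrier hulU)
      (T.sees_symm ((connectedComponentIn_subset _ _ hulCa).2))
      (T.sees_symm ((connectedComponentIn_subset _ _ hulCb).2))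
  · set KR : Set (ℝ × ℝ) := T.Uset ∩ {p | g.1 ≤ p.1} with hKR
    have hKRcomp : IsCompact KR :=
      hUcomp.of_isClosed_subset (T.Uset_closed.inter (isClosed_le (by continuity) (by continuity)))
        Set.inter_subset_left
    have hKRne : KR.Nonempty := ⟨Ma, hMaU, hMag.le⟩
    obtain ⟨ur, hurK, hurmin⟩ := hKRcomp.exists_isMinOn hKRne continuous_fst.continuousOn
    have hurU : ur ∈ T.Uset := hurK.1
    have hurg : g.1 < ur.1 := by
      have h2 : g.1 ≤ ur.1 := hurK.2
      rcases lt_or_eq_of_le h2 with h | h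
      · exact h
      · exact absurd (T.carrier_uniq (T.Uset_subset_carrier hurU) hgc h.symm ▸ hurU) hgU
    have hMaur : ur.1 ≤ Ma.1 := hurmin (⟨hMaU, hMag.le⟩ : Ma ∈ KR)
    have hMbur : ur.1 ≤ Mb.1 := hurmin (⟨hMbU, hMbg.le⟩ : Mb ∈ KR)
    have hurCa : ur ∈ Ca := T.xconvex hCasub hCaconn hgCa hMaC
      (T.Uset_subset_carrier hurU) hurg.le hMaur
    have hurCb : ur ∈ Cb := T.xconvex hCbsub hCbconn hgCb hMbC
      (T.Uset_subset_carrier hurU) hurg.le hMbur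
    refine ⟨ur, hurU, hurg, fun u hu hug => hurmin (⟨hu, hug.le⟩ : u ∈ KR), ?_⟩
    exact T.sees_edge_of_sees_endpoints hi (T.Uset_subset_carrier hurU)
      (T.sees_symm ((connectedComponentIn_subset _ _ hurCa).2))
      (T.sees_symm ((connectedComponentIn_subset _ _ hurCb).2))
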